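/- Fix an integer q ≥ 2 and an alphabet Σ_q of size q with a distinguished symbol 0. For all integers n, k with k ≥ 1 and n ≥ 2k, the following inequality of real numbers holds: r_q(n, k) ≤ q^{n − c·(n−2k)/q^k}, where c = log_q(e) · (q−1)^2 / (2q^2). -/

import Mathlib

/-- `p` is a period of the vector `s = (s_1, …, s_n)` (0-indexed here):
`s_i = s_{i+p}` for all valid indices. -/
def IsPeriod {α : Type*} {n : ℕ} (s : Fin n → α) (p : ℕ) : Prop :=
  ∀ i : ℕ, ∀ h : i + p < n,
    s ⟨i, lt_of_le_of_lt (Nat.le_add_right i p) h⟩ = s ⟨i + p, h⟩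

/-- The window of length `ℓ` of `s` starting at (0-indexed) position `i`. -/
def window {α : Type*} {n : ℕ} (s : Fin n → α) (i ℓ : ℕ) (h : i + ℓ ≤ n) :
    Fin ℓ → α :=
  fun j => s ⟨i + j, Nat.lt_of_lt_of_le (Nat.add_lt_add_left j.isLt i) h⟩

/-- `s` is an `ℓ`-window `p`-least-period avoiding vector: no window of
length `ℓ` has any period `p'` with `1 ≤ p' < p`. -/
def LPAvoiding {α : Type*} {n : ℕ} (ℓ p : ℕ) (s : Fin n → α) : Prop :=
  ∀ i : ℕ, ∀ h : i + ℓ ≤ n, ∀ p', 1 ≤ p' → p' < p →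
    ¬ IsPeriod (window s i ℓ h) p'

/-- `s` is an `ℓ`-window `p`-period avoiding vector: no window of
length `ℓ` has period `p`. -/
def PAvoiding {α : Type*} {n : ℕ} (ℓ p : ℕ) (s : Fin n → α) : Prop :=
  ∀ i : ℕ, ∀ h : i + ℓ ≤ n, ¬ IsPeriod (window s i ℓ h) p

/-- `s` satisfies the `k`-RLL constraint w.r.t. the zero symbol `z`:
no window of length `k` consists entirely of `z`. -/
def RLLok {α : Type*} {n : ℕ} (z : α) (k : ℕ) (s : Fin n → α) : Prop :=
  ∀ i : ℕ, ∀ h : i + k ≤ n, ∃ j : Fin k, window s i k h j ≠ z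

lemma rllok_window {α : Type*} {n : ℕ} (z : α) (k : ℕ) (s : Fin n → α)
    (hs : RLLok z k s) (i L : ℕ) (h : i + L ≤ n) :
    RLLok z k (window s i L h) := by
  intro a ha
  obtain ⟨j, hj⟩ := hs (i + a) (by omega)
  refine ⟨j, ?_⟩
  simpa [window, Nat.add_assoc] using hj


lemma rll_stepA {q : ℕ} {Sigma : Type*} [Fintype Sigma]
    (hcard : Fintype.card Sigma = q) (z : Sigma) (n k : ℕ) (hk : 1 ≤ k)
    (hn : 2 * k ≤ n) :
    Nat.card {s : Fin n → Sigma // RLLok z k s} ≤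
      (Nat.card {t : Fin (2*k) → Sigma // RLLok z k t}) ^ (n / (2*k)) *
        q ^ (n % (2*k)) := by
  classical
  set L := 2*k with hLdef
  set m := n / L with hm
  set r := n % L with hr
  have hL : 0 < L := by omega
  have hnr : L * m + r = n := Nat.div_add_mod n L
  have hrL : r < L := Nat.mod_lt _ hL
  let Φ : {s : Fin n → Sigma // RLLok z k s} →
      (Fin m → {t : Fin L → Sigma // RLLok z k t}) × (Fin r → Sigma) :=
    fun s => (fun b => ⟨window s.1 (L*b) L (by
        have : (b:ℕ) + 1 ≤ m := b.isLt
        calc L * b + L = L * (b+1) := by ring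
        _ ≤ L * m := Nat.mul_le_mul_left _ this
        _ ≤ n := by omega),
      rllok_window z k s.1 s.2 _ _ _⟩,
      fun j => s.1 ⟨L*m + j, by have := j.isLt; omega⟩)
  have hinj : Function.Injective Φ := by
    intro s s' h
    have h1 := congrFun (congrArg Prod.fst h)
    have h2 := congrFun (congrArg Prod.snd h)
    apply Subtype.ext
    funext i
    have key : ∀ (a : ℕ) (ha : a < n), s.1 ⟨a, ha⟩ = s'.1 ⟨a, ha⟩ := by
      intro a ha
      by_cases hc : a < L * m
      · have hbm : a / L < m := Nat.div_lt_of_lt_mul (by omega)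
        have hjL : a % L < L := Nat.mod_lt _ hL
        have hb := congrArg Subtype.val (h1 ⟨a / L, hbm⟩)
        have := congrFun hb ⟨a % L, hjL⟩
        simp only [Φ, window] at this
        have heq : L * (a / L) + a % L = a := Nat.div_add_mod a L
        convert this using 2 <;> exact (Fin.ext (by simp [heq])).symm
      · have hj : a - L * m < r := by omega
        have := h2 ⟨a - L*m, hj⟩
        simp only [Φ] at this
        convert this using 2 <;> exact (Fin.ext (by simp; omega)).symm
    exact key i i.isLt
  calc Nat.card {s : Fin n → Sigma // RLLok z k s}
      ≤ Nat.card ((Fin m → {t : Fin L → Sigma // RLLok z k t}) × (Fin r → Sigma)) :=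
        Nat.card_le_card_of_injective Φ hinj
    _ = (Nat.card {t : Fin L → Sigma // RLLok z k t}) ^ m * q ^ r := by
        rw [Nat.card_prod, Nat.card_fun, Nat.card_fun]
        simp [Nat.card_eq_fintype_card, hcard]

lemma rll_stepB {q : ℕ} (hq : 2 ≤ q) {Sigma : Type*} [Fintype Sigma]
    (hcard : Fintype.card Sigma = q) (z : Sigma) (k : ℕ) (hk : 1 ≤ k) :
    Nat.card {t : Fin (2*k) → Sigma // RLLok z k t} + k * (q-1) * q^(k-1) ≤ q^(2*k) := by
  classical
  set L := 2*k with hLdef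
  -- the "bad" lower bound via an injection
  let ext : (Fin (k-1) → Sigma) → ℕ → Sigma := fun g i => if h : i < k-1 then g ⟨i,h⟩ else z
  let u : Fin k → Sigma → (Fin (k-1) → Sigma) → Fin L → Sigma :=
    fun t x g j => if (j:ℕ) < t then ext g j else if (j:ℕ) = t then x
      else if (j:ℕ) ≤ (t:ℕ) + k then z else ext g ((j:ℕ) - (k+1))
  have u_at_t : ∀ (t : Fin k) x g (j : Fin L), (j:ℕ) = t → u t x g j = x := by
    intro t x g j hj
    simp [u, hj]
  have u_mid : ∀ (t : Fin k) x g (j : Fin L), (t:ℕ) < j → (j:ℕ) ≤ (t:ℕ) + k →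
      u t x g j = z := by
    intro t x g j h1 h2
    simp only [u]
    rw [if_neg (by omega), if_neg (by omega), if_pos h2]
  have u_lo : ∀ (t : Fin k) x g (j : Fin L), (j:ℕ) < t → u t x g j = ext g j := by
    intro t x g j h1
    simp [u, h1]
  have u_hi : ∀ (t : Fin k) x g (j : Fin L), (t:ℕ) + k < j →
      u t x g j = ext g ((j:ℕ) - (k+1)) := by
    intro t x g j h1
    simp only [u]
    rw [if_neg (by omega), if_neg (by omega), if_neg (by omega)]
  have u_bad : ∀ (t : Fin k) (x : Sigma) (hx : x ≠ z) g, ¬ RLLok z k (u t x g) := by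
    intro t x hx g hr
    have ht : (t:ℕ) < k := t.isLt
    obtain ⟨j, hj⟩ := hr ((t:ℕ)+1) (by omega)
    apply hj
    have hjk : (j:ℕ) < k := j.isLt
    simp only [window]
    exact u_mid t x g _ (by simp; omega) (by simp; omega)
  let F : Fin k × {x : Sigma // x ≠ z} × (Fin (k-1) → Sigma) →
      {t : Fin L → Sigma // ¬ RLLok z k t} :=
    fun p => ⟨u p.1 p.2.1.1 p.2.2, u_bad p.1 p.2.1.1 p.2.1.2 p.2.2⟩
  have hinj : Function.Injective F := by
    rintro ⟨t, ⟨x, hx⟩, g⟩ ⟨t', ⟨x', hx'⟩, g'⟩ h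
    have hL1 : 1 ≤ L := by omega
    have huv : u t x g = u t' x' g' := congrArg Subtype.val h
    have ht : (t:ℕ) < k := t.isLt
    have ht' : (t':ℕ) < k := t'.isLt
    -- t = t'
    have htt : (t:ℕ) = (t':ℕ) := by
      by_contra hne
      rcases Nat.lt_or_ge (t:ℕ) (t':ℕ) with hlt | hge
      · have hj : ((t':ℕ) : ℕ) < L := by omega
        have e1 := congrFun huv ⟨t', hj⟩
        rw [u_mid t x g _ (by simpa) (by simp; omega),
            u_at_t t' x' g' _ (by simp)] at e1
        exact hx' e1.symm
      · have hlt' : (t':ℕ) < (t:ℕ) := by omega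
        have hj : ((t:ℕ) : ℕ) < L := by omega
        have e1 := congrFun huv ⟨t, hj⟩
        rw [u_at_t t x g _ (by simp),
            u_mid t' x' g' _ (by simpa) (by simp; omega)] at e1
        exact hx e1
    have htF : t = t' := Fin.ext htt
    subst htF
    have hxx : x = x' := by
      have hj : ((t:ℕ) : ℕ) < L := by omega
      have e1 := congrFun huv ⟨t, hj⟩
      rwa [u_at_t t x g _ (by simp), u_at_t t x' g' _ (by simp)] at e1
    have hgg : g = g' := by
      funext i
      have hik : (i:ℕ) < k - 1 := i.isLt
      rcases Nat.lt_or_ge (i:ℕ) (t:ℕ) with hlt | hge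
      · have hj : (i:ℕ) < L := by omega
        have e1 := congrFun huv ⟨i, hj⟩
        rw [u_lo t x g _ (by simpa), u_lo t x' g' _ (by simpa)] at e1
        simpa [ext, dif_pos hik] using e1
      · have hj : (i:ℕ) + k + 1 < L := by omega
        have e1 := congrFun huv ⟨(i:ℕ) + k + 1, hj⟩
        rw [u_hi t x g _ (by simp; omega), u_hi t x' g' _ (by simp; omega)] at e1
        have hsub : (i:ℕ) + k + 1 - (k+1) = (i:ℕ) := by omega
        rw [hsub] at e1
        simpa [ext, dif_pos hik] using e1
    simp [hxx, hgg]
  have hbad : k * (q-1) * q^(k-1) ≤ Nat.card {t : Fin L → Sigma // ¬ RLLok z k t} := by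
    have := Nat.card_le_card_of_injective F hinj
    rw [Nat.card_prod, Nat.card_prod, Nat.card_fun] at this
    simp only [Nat.card_eq_fintype_card] at this
    rw [Fintype.card_fin, Fintype.card_fin, hcard] at this
    have hne : Fintype.card {x : Sigma // x ≠ z} = q - 1 := by
      have : Fintype.card {x : Sigma // ¬ (x = z)} =
          Fintype.card Sigma - Fintype.card {x : Sigma // x = z} :=
        Fintype.card_subtype_compl _
      simpa [hcard, Fintype.card_subtype_eq] using this
    rw [hne] at this
    rw [Nat.card_eq_fintype_card]
    calc k * (q-1) * q^(k-1) = k * ((q-1) * q^(k-1)) := by ring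
    _ ≤ _ := this
  have htot : Nat.card {t : Fin L → Sigma // RLLok z k t} +
      Nat.card {t : Fin L → Sigma // ¬ RLLok z k t} = q^L := by
    have h1 : Fintype.card {t : Fin L → Sigma // ¬ RLLok z k t} =
        Fintype.card (Fin L → Sigma) - Fintype.card {t : Fin L → Sigma // RLLok z k t} :=
      Fintype.card_subtype_compl _
    have h2 : Fintype.card {t : Fin L → Sigma // RLLok z k t} ≤
        Fintype.card (Fin L → Sigma) := Fintype.card_subtype_le _
    have h3 : Fintype.card (Fin L → Sigma) = q^L := by
      simp [Fintype.card_fun, hcard]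
    simp only [Nat.card_eq_fintype_card]
    omega
  omega

lemma rll_calc (Q P M K N2 : ℝ) (hQ1 : 1 ≤ Q) (hP : 0 < P)
    (hM : 0 ≤ M) (hK : 0 ≤ K) (hN2 : 0 ≤ N2)
    (hkey : (Q - 1) * N2 ≤ 2 * M * K * Q) :
    (Q - 1)^2 / (2 * Q^2) * N2 / (P * Q) ≤ M * (K * (Q - 1) * P / ((P * Q)^2)) := by
  have hQ0 : (0:ℝ) < Q := by linarith
  have h3 : (Q-1)^2 * N2 ≤ 2*M*K*(Q-1)*Q := by
    nlinarith [mul_le_mul_of_nonneg_left hkey (show (0:ℝ) ≤ Q - 1 by linarith)]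
  rw [div_mul_eq_mul_div, div_div, mul_div_assoc',
    div_le_div_iff₀ (by positivity) (by positivity)]
  nlinarith [mul_le_mul_of_nonneg_right h3 (show (0:ℝ) ≤ P^2*Q^2 by positivity),
    hP.le, hQ0.le]


/-- RLL upper bound: for `k ≥ 1` and `n ≥ 2k`,
`r_q(n, k) ≤ q^{n − c·(n−2k)/q^k}` where `c = log_q(e)·(q−1)²/(2q²)`. -/
theorem rll_upper_bound
    {q : ℕ} (hq : 2 ≤ q) (Sigma : Type*) [Fintype Sigma]
    (hcard : Fintype.card Sigma = q) (z : Sigma)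
    (n k : ℕ) (hk : 1 ≤ k) (hn : 2 * k ≤ n) :
    (Nat.card {s : Fin n → Sigma // RLLok z k s} : ℝ) ≤
      (q : ℝ) ^ ((n : ℝ) -
        (Real.logb q (Real.exp 1) * ((q : ℝ) - 1) ^ 2 / (2 * (q : ℝ) ^ 2)) *
          ((n : ℝ) - 2 * (k : ℝ)) / (q : ℝ) ^ k) := by
  classical
  have hA := rll_stepA hcard z n k hk hn
  have hB := rll_stepB hq hcard z k hk
  set L := 2*k with hLdef
  set m := n / L with hm
  set r := n % L with hr
  set G := Nat.card {t : Fin L → Sigma // RLLok z k t} with hG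
  have hL : 0 < L := by omega
  have hnr : L * m + r = n := Nat.div_add_mod n L
  have hrL : r < L := Nat.mod_lt _ hL
  have hQ1 : (1:ℝ) < (q:ℝ) := by exact_mod_cast (by omega : 1 < q)
  have hQ0 : (0:ℝ) < (q:ℝ) := by linarith
  have hlogQ : 0 < Real.log (q:ℝ) := Real.log_pos hQ1
  have hlogne : Real.log (q:ℝ) ≠ 0 := ne_of_gt hlogQ
  set P : ℝ := (q:ℝ)^(k-1) with hPdef
  have hP : (0:ℝ) < P := by positivity
  have hQk : (q:ℝ)^k = P * (q:ℝ) := by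
    rw [hPdef, ← pow_succ]
    congr 1; omega
  have hQL : (q:ℝ)^L = (P*(q:ℝ))^2 := by
    rw [hLdef, show 2*k = k*2 by ring, pow_mul, hQk]
  set D : ℝ := (k:ℝ) * ((q:ℝ)-1) * P with hD
  have hD0 : 0 ≤ D := by
    have : (0:ℝ) ≤ (q:ℝ) - 1 := by linarith
    positivity
  -- cast step B
  have hBR : (G:ℝ) + D ≤ (q:ℝ)^L := by
    have h1q : 1 ≤ q := by omega
    have hcast : ((G + k * (q-1) * q^(k-1) : ℕ) : ℝ) ≤ (((q:ℕ)^L : ℕ) : ℝ) :=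
      Nat.cast_le.mpr hB
    push_cast [Nat.cast_sub h1q] at hcast
    rw [hD, hPdef]
    convert hcast using 2 <;> push_cast <;> ring
  have hDL : D ≤ (q:ℝ)^L := by
    have := Nat.cast_nonneg (α := ℝ) G; linarith
  set y : ℝ := D / (q:ℝ)^L with hy
  have hy0 : 0 ≤ y := by positivity
  have hy1 : y ≤ 1 := by
    rw [hy, div_le_one (by positivity)]; exact hDL
  -- chain of inequalities
  have hGm : ((G:ℝ))^m ≤ ((q:ℝ)^L)^m * (1 - y)^m := by
    rw [← mul_pow]
    apply pow_le_pow_left₀ (Nat.cast_nonneg G)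
    have hEq : (q:ℝ)^L * (1 - y) = (q:ℝ)^L - D := by
      rw [hy]; field_simp
    rw [hEq]; linarith
  have hexp : (1 - y)^m ≤ Real.exp (-((m:ℝ) * y)) := by
    have h1 : 1 - y ≤ Real.exp (-y) := by
      have := Real.add_one_le_exp (-y); linarith
    calc (1 - y)^m ≤ (Real.exp (-y))^m := pow_le_pow_left₀ (by linarith) h1 m
    _ = Real.exp (-((m:ℝ) * y)) := by
        rw [← Real.exp_nat_mul]; congr 1; ring
  have hQn : (((q:ℝ))^L)^m * (q:ℝ)^r = (q:ℝ)^n := by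
    rw [← pow_mul, ← pow_add, hnr]
  have hchain : (Nat.card {s : Fin n → Sigma // RLLok z k s} : ℝ) ≤
      (q:ℝ)^n * Real.exp (-((m:ℝ) * y)) := by
    have hAR : (Nat.card {s : Fin n → Sigma // RLLok z k s} : ℝ) ≤
        ((G ^ m * q ^ r : ℕ) : ℝ) := Nat.cast_le.mpr hA
    push_cast at hAR
    calc (Nat.card {s : Fin n → Sigma // RLLok z k s} : ℝ)
        ≤ (G:ℝ)^m * (q:ℝ)^r := hAR
      _ ≤ (((q:ℝ)^L)^m * (1 - y)^m) * (q:ℝ)^r :=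
          mul_le_mul_of_nonneg_right hGm (by positivity)
      _ ≤ (((q:ℝ)^L)^m * Real.exp (-((m:ℝ) * y))) * (q:ℝ)^r := by
          apply mul_le_mul_of_nonneg_right _ (by positivity)
          exact mul_le_mul_of_nonneg_left hexp (by positivity)
      _ = (q:ℝ)^n * Real.exp (-((m:ℝ) * y)) := by rw [← hQn]; ring
  -- numeric facts
  have hn2k : (0:ℝ) ≤ (n:ℝ) - 2*(k:ℝ) := by
    have : ((2*k:ℕ) : ℝ) ≤ (n:ℝ) := Nat.cast_le.mpr hn
    push_cast at this; linarith
  have h1 : n < L*m + L := by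
    rw [← hnr]; exact Nat.add_lt_add_left hrL _
  have h1R : (n:ℝ) ≤ 2*(k:ℝ)*(m:ℝ) + 2*(k:ℝ) := by
    have h2 : ((n:ℕ):ℝ) ≤ ((L*m + L : ℕ):ℝ) := Nat.cast_le.mpr h1.le
    push_cast [hLdef] at h2
    linarith
  have hW2 : (n:ℝ) - 2*(k:ℝ) ≤ 2*(k:ℝ)*(m:ℝ) := by linarith
  have hkey : ((q:ℝ) - 1) * ((n:ℝ) - 2*(k:ℝ)) ≤ 2*(m:ℝ)*(k:ℝ)*(q:ℝ) := by
    nlinarith [mul_le_mul_of_nonneg_left hW2 hQ0.le, hn2k]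
  -- final exponent comparison
  have hlogb : Real.logb (q:ℝ) (Real.exp 1) = 1 / Real.log (q:ℝ) := by
    simp [Real.logb, Real.log_exp]
  have hexpand : Real.log (q:ℝ) * ((n : ℝ) -
      (Real.logb q (Real.exp 1) * ((q : ℝ) - 1) ^ 2 / (2 * (q : ℝ) ^ 2)) *
        ((n : ℝ) - 2 * (k : ℝ)) / (q : ℝ) ^ k) =
      (n:ℝ) * Real.log (q:ℝ) -
        ((q:ℝ) - 1)^2 / (2 * (q:ℝ)^2) * ((n:ℝ) - 2*(k:ℝ)) / (q:ℝ)^k := by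
    rw [hlogb]
    have hqk : ((q:ℝ))^k ≠ 0 := by positivity
    field_simp
  have hred : ((q:ℝ) - 1)^2 / (2 * (q:ℝ)^2) * ((n:ℝ) - 2*(k:ℝ)) / (q:ℝ)^k ≤
      (m:ℝ) * y := by
    rw [hy, hD, hQk, hQL]
    exact rll_calc (q:ℝ) P (m:ℝ) (k:ℝ) ((n:ℝ) - 2*(k:ℝ)) hQ1.le hP
      (Nat.cast_nonneg m) (Nat.cast_nonneg k) hn2k (by linarith [hkey])
  calc (Nat.card {s : Fin n → Sigma // RLLok z k s} : ℝ)
      ≤ (q:ℝ)^n * Real.exp (-((m:ℝ) * y)) := hchain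
    _ = Real.exp ((n:ℝ) * Real.log (q:ℝ) - (m:ℝ) * y) := by
        rw [show (q:ℝ)^n = Real.exp ((n:ℝ) * Real.log (q:ℝ)) by
          rw [← Real.log_pow, Real.exp_log (by positivity)],
          ← Real.exp_add]
        norm_num [sub_eq_add_neg]
    _ ≤ _ := by
        rw [Real.rpow_def_of_pos hQ0, Real.exp_le_exp, hexpand]
        linarith [hred]
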